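/- arXiv:2007.13288 — 5 statements merged into one kernel-verified Lean document; each statement's English description precedes it below -/
import Mathlib

section
/- Let A be an invertible real n×n matrix with rows a_1,...,a_n, let x be the solution of Ax = b, and let x_k be the current iterate. If the randomized Kaczmarz/SGD update x_{k+1} = x_k + ((b_i - ⟨a_i, x_k⟩)/‖a_i‖²) a_i is applied with index i chosen with probability ‖a_i‖²/‖A‖_F², then with α = max_{1≤i≤n} ‖A a_i‖²/‖a_i‖², the expected value of ‖A x_{k+1} - b‖² satisfies E‖A x_{k+1} - b‖² ≤ (1 + α/‖A‖_F²)‖A x_k - b‖² − (2/‖A‖_F²)‖Aᵀ(A x_k − b)‖². -/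
set_option maxHeartbeats 1000000


open RealInnerProductSpace Finset Matrix
noncomputable section

/-- Coercion of a plain vector to Euclidean space (for norms and inner products). -/
def toE {n : ℕ} (v : Fin n → ℝ) : EuclideanSpace ℝ (Fin n) := WithLp.toLp 2 v

lemma normsqE {n : ℕ} (v : Fin n → ℝ) : ‖toE v‖ ^ 2 = ∑ i, (v i) ^ 2 := by
  rw [EuclideanSpace.norm_eq, Real.sq_sqrt (by positivity)]
  simp [toE, sq_abs]

lemma innerE {n : ℕ} (u v : Fin n → ℝ) : ⟪toE u, toE v⟫ = ∑ i, u i * v i := by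
  simp [toE, PiLp.inner_apply, mul_comm]

/-- Theorem 1: one-step expected decay of `‖A x_{k+1} - b‖²` under randomized
Kaczmarz / SGD with rows chosen with probability `‖a_i‖²/‖A‖_F²`. -/
theorem sgd_least_squares_one_step {n : ℕ} (A : Matrix (Fin n) (Fin n) ℝ)
    (hA : IsUnit A.det) (hrows : ∀ i, A i ≠ 0)
    (b x xk : Fin n → ℝ) (hx : A.mulVec x = b)
    (α : ℝ) (hα : IsGreatest (Set.range fun i => ‖toE (A.mulVec (A i))‖ ^ 2 / ‖toE (A i)‖ ^ 2) α) :
    ∑ i, (‖toE (A i)‖ ^ 2 / (∑ j, ‖toE (A j)‖ ^ 2)) *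
        ‖toE (A.mulVec (xk + ((b i - ⟪toE (A i), toE xk⟫) / ‖toE (A i)‖ ^ 2) • A i) - b)‖ ^ 2
      ≤ (1 + α / (∑ j, ‖toE (A j)‖ ^ 2)) * ‖toE (A.mulVec xk - b)‖ ^ 2
        - (2 / (∑ j, ‖toE (A j)‖ ^ 2)) * ‖toE (Aᵀ.mulVec (A.mulVec xk - b))‖ ^ 2 := by
  obtain ⟨⟨i0, hi0⟩, hub⟩ := hα
  set r : Fin n → ℝ := A.mulVec xk - b with hr
  set F : ℝ := ∑ j, ‖toE (A j)‖ ^ 2 with hF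
  have hnpos : ∀ i, (0:ℝ) < ‖toE (A i)‖ ^ 2 := fun i =>
    pow_pos (norm_pos_iff.mpr (show toE (A i) ≠ 0 from fun h => hrows i (by simpa [toE] using congrArg WithLp.ofLp h))) 2
  have hFpos : 0 < F := Finset.sum_pos (fun j _ => hnpos j) ⟨i0, Finset.mem_univ i0⟩
  -- pointwise expansion
  have key : ∀ i, ‖toE (A.mulVec (xk + ((b i - ⟪toE (A i), toE xk⟫) / ‖toE (A i)‖ ^ 2) • A i) - b)‖ ^ 2
      = ‖toE r‖ ^ 2 - 2 * (r i / ‖toE (A i)‖ ^ 2) * ⟪toE r, toE (A.mulVec (A i))⟫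
        + (r i / ‖toE (A i)‖ ^ 2) ^ 2 * ‖toE (A.mulVec (A i))‖ ^ 2 := by
    intro i
    have hbi : b i - ⟪toE (A i), toE xk⟫ = -(r i) := by
      simp [hr, innerE, Matrix.mulVec, dotProduct]
    rw [hbi]
    set c : ℝ := -(r i) / ‖toE (A i)‖ ^ 2 with hc
    have hvec : A.mulVec (xk + c • A i) - b = r + c • A.mulVec (A i) := by
      rw [Matrix.mulVec_add, Matrix.mulVec_smul, hr]
      module
    rw [hvec]
    have htE : toE (r + c • A.mulVec (A i)) = toE r + c • toE (A.mulVec (A i)) := by simp [toE]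
    rw [htE, norm_add_sq_real, real_inner_smul_right, norm_smul]
    have hcr : c = -(r i / ‖toE (A i)‖ ^ 2) := by rw [hc]; ring
    rw [hcr, Real.norm_eq_abs, mul_pow, sq_abs]
    ring
  rw [Finset.sum_congr rfl (fun i _ => by rw [key i])]
  -- per-term algebraic split
  have eq2 : ∀ i, (‖toE (A i)‖ ^ 2 / F) *
      (‖toE r‖ ^ 2 - 2 * (r i / ‖toE (A i)‖ ^ 2) * ⟪toE r, toE (A.mulVec (A i))⟫
        + (r i / ‖toE (A i)‖ ^ 2) ^ 2 * ‖toE (A.mulVec (A i))‖ ^ 2)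
      = (‖toE r‖ ^ 2 / F) * ‖toE (A i)‖ ^ 2
        - (2 / F) * (r i * ⟪toE r, toE (A.mulVec (A i))⟫)
        + (1 / F) * ((r i) ^ 2 * (‖toE (A.mulVec (A i))‖ ^ 2 / ‖toE (A i)‖ ^ 2)) := by
    intro i
    have hni := (hnpos i).ne'
    have hni' : ‖toE (A i)‖ ≠ 0 := fun h => hni (by rw [h]; ring)
    field_simp
  rw [Finset.sum_congr rfl (fun i _ => by rw [eq2 i]), Finset.sum_add_distrib,
    Finset.sum_sub_distrib, ← Finset.mul_sum, ← Finset.mul_sum, ← Finset.mul_sum, ← hF]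
  have hS1 : (‖toE r‖ ^ 2 / F) * F = ‖toE r‖ ^ 2 := by
    field_simp
  -- transpose identity
  have hT : ∑ i, r i * ⟪toE r, toE (A.mulVec (A i))⟫ = ‖toE (Aᵀ.mulVec r)‖ ^ 2 := by
    simp only [innerE, normsqE, Matrix.mulVec, dotProduct, Matrix.transpose_apply]
    have h1 : ∀ k : Fin n, (∑ j, A j k * r j) ^ 2 = ∑ i, ∑ j, (A i k * r i) * (A j k * r j) := by
      intro k
      rw [sq, Finset.sum_mul_sum]
    simp only [h1]
    rw [Finset.sum_comm]
    refine Finset.sum_congr rfl fun i _ => ?_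
    rw [Finset.mul_sum]
    rw [Finset.sum_comm]
    refine Finset.sum_congr rfl fun j _ => ?_
    rw [Finset.mul_sum, Finset.mul_sum]
    refine Finset.sum_congr rfl fun k _ => ?_
    ring
  -- bound on the third sum
  have hS3 : ∑ i, (r i) ^ 2 * (‖toE (A.mulVec (A i))‖ ^ 2 / ‖toE (A i)‖ ^ 2)
      ≤ α * ‖toE r‖ ^ 2 := by
    rw [normsqE, Finset.mul_sum]
    refine Finset.sum_le_sum fun i _ => ?_
    have hle : ‖toE (A.mulVec (A i))‖ ^ 2 / ‖toE (A i)‖ ^ 2 ≤ α := hub ⟨i, rfl⟩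
    have := mul_le_mul_of_nonneg_left hle (sq_nonneg (r i))
    linarith [this]
  rw [hS1, hT]
  have h3 : (1 / F) * (∑ i, (r i) ^ 2 * (‖toE (A.mulVec (A i))‖ ^ 2 / ‖toE (A i)‖ ^ 2))
      ≤ (1 / F) * (α * ‖toE r‖ ^ 2) := by
    exact mul_le_mul_of_nonneg_left hS3 (one_div_nonneg.mpr hFpos.le)
  have hgoal : (1 + α / F) * ‖toE r‖ ^ 2 - (2 / F) * ‖toE (Aᵀ.mulVec r)‖ ^ 2
      = ‖toE r‖ ^ 2 - (2 / F) * ‖toE (Aᵀ.mulVec r)‖ ^ 2 + (1 / F) * (α * ‖toE r‖ ^ 2) := by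
    field_simp
    ring
  rw [hgoal]
  linarith [h3]
end
end

section
/- Let A ∈ ℝ^{n×n} with nonzero rows a_i, r ∈ ℝⁿ, and define the random vector r' = r − (⟨a_i, r⟩/‖a_i‖²) a_i where i is chosen with probability ‖a_i‖²/‖A‖_F². Then E‖A r'‖² = ‖A r‖² − (2/‖A‖_F²)‖Aᵀ A r‖² + (1/‖A‖_F²) Σ_{i=1}^n ⟨a_i, r⟩² ‖A a_i‖²/‖a_i‖². -/
open RealInnerProductSpace Finset Matrix
noncomputable section

lemma kaczmarz_sum_aux {n : ℕ} (A : Matrix (Fin n) (Fin n) ℝ) (q : Fin n → ℝ) :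
    ∑ i, q i * ∑ k, q k * ∑ l, A k l * A i l = ∑ l, (∑ i, A i l * q i) ^ 2 := by
  calc ∑ i, q i * ∑ k, q k * ∑ l, A k l * A i l
      = ∑ i, ∑ k, ∑ l, q i * (q k * (A k l * A i l)) := by
        simp [Finset.mul_sum]
    _ = ∑ i, ∑ l, ∑ k, q i * (q k * (A k l * A i l)) :=
        Finset.sum_congr rfl (fun i _ => Finset.sum_comm)
    _ = ∑ l, ∑ i, ∑ k, q i * (q k * (A k l * A i l)) := Finset.sum_comm
    _ = ∑ l, (∑ i, A i l * q i) ^ 2 := by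
        refine Finset.sum_congr rfl (fun l _ => ?_)
        rw [sq, Finset.sum_mul_sum]
        exact Finset.sum_congr rfl (fun i _ => Finset.sum_congr rfl (fun k _ => by ring))

lemma toE_inner {n : ℕ} (u v : Fin n → ℝ) : ⟪toE u, toE v⟫ = ∑ k, u k * v k := by
  simp [toE, PiLp.inner_apply, RCLike.inner_apply, conj_trivial, mul_comm]

lemma toE_normsq {n : ℕ} (v : Fin n → ℝ) : ‖toE v‖ ^ 2 = ∑ k, v k ^ 2 := by
  rw [← real_inner_self_eq_norm_sq, toE_inner]
  simp [sq]

lemma toE_expand {n : ℕ} (A : Matrix (Fin n) (Fin n) ℝ) (r : Fin n → ℝ) (i : Fin n) (c : ℝ) :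
    ‖toE (A.mulVec (r - c • A i))‖ ^ 2
      = ‖toE (A.mulVec r)‖ ^ 2
        - 2 * c * ⟪toE (A.mulVec r), toE (A.mulVec (A i))⟫
        + c ^ 2 * ‖toE (A.mulVec (A i))‖ ^ 2 := by
  have h : toE (A.mulVec (r - c • A i)) = toE (A.mulVec r) - c • toE (A.mulVec (A i)) := by
    rw [Matrix.mulVec_sub, Matrix.mulVec_smul]; simp [toE]
  rw [h, norm_sub_sq_real, inner_smul_right, norm_smul]
  simp only [Real.norm_eq_abs, mul_pow, sq_abs]
  ring

lemma kaczmarz_middle {n : ℕ} (A : Matrix (Fin n) (Fin n) ℝ) (r : Fin n → ℝ) :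
    ∑ i, ⟪toE (A i), toE r⟫ * ⟪toE (A.mulVec r), toE (A.mulVec (A i))⟫
      = ‖toE (Aᵀ.mulVec (A.mulVec r))‖ ^ 2 := by
  have hq : ∀ i, ⟪toE (A i), toE r⟫ = A.mulVec r i := fun i => by rw [toE_inner]; rfl
  have h1 : ∀ i, ⟪toE (A.mulVec r), toE (A.mulVec (A i))⟫
      = ∑ k, A.mulVec r k * ∑ l, A k l * A i l := fun i => by
    rw [toE_inner]; rfl
  have h2 : ‖toE (Aᵀ.mulVec (A.mulVec r))‖ ^ 2 = ∑ l, (∑ i, A i l * A.mulVec r i) ^ 2 := by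
    rw [toE_normsq]; rfl
  simp only [hq, h1, h2]
  exact kaczmarz_sum_aux A (A.mulVec r)

/-- Exact one-step identity for `E ‖A r'‖²` under randomized Kaczmarz. -/
theorem kaczmarz_one_step_identity {n : ℕ} (A : Matrix (Fin n) (Fin n) ℝ)
    (hrows : ∀ i, A i ≠ 0) (r : Fin n → ℝ) :
    ∑ i, (‖toE (A i)‖ ^ 2 / (∑ j, ‖toE (A j)‖ ^ 2)) *
        ‖toE (A.mulVec (r - (⟪toE (A i), toE r⟫ / ‖toE (A i)‖ ^ 2) • A i))‖ ^ 2
      = ‖toE (A.mulVec r)‖ ^ 2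
        - (2 / (∑ j, ‖toE (A j)‖ ^ 2)) * ‖toE (Aᵀ.mulVec (A.mulVec r))‖ ^ 2
        + (1 / (∑ j, ‖toE (A j)‖ ^ 2)) *
            ∑ i, ⟪toE (A i), toE r⟫ ^ 2 * ‖toE (A.mulVec (A i))‖ ^ 2 / ‖toE (A i)‖ ^ 2 := by
  rcases Nat.eq_zero_or_pos n with hn | hn
  · subst hn
    simp [Finset.univ_eq_empty, toE_normsq]
  have hne : Nonempty (Fin n) := ⟨⟨0, hn⟩⟩
  set F : ℝ := ∑ j, ‖toE (A j)‖ ^ 2 with hFdef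
  have hS : ∀ i, ‖toE (A i)‖ ^ 2 ≠ 0 :=
    fun i => pow_ne_zero _ (norm_ne_zero_iff.mpr (fun h => hrows i (by simpa [toE] using h)))
  have hSpos : ∀ i, (0:ℝ) < ‖toE (A i)‖ ^ 2 :=
    fun i => lt_of_le_of_ne (sq_nonneg _) (Ne.symm (hS i))
  have hF : F ≠ 0 := ne_of_gt (Finset.sum_pos (fun i _ => hSpos i) Finset.univ_nonempty)
  -- expand each summand
  have hterm : ∀ i, (‖toE (A i)‖ ^ 2 / F) *
      ‖toE (A.mulVec (r - (⟪toE (A i), toE r⟫ / ‖toE (A i)‖ ^ 2) • A i))‖ ^ 2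
      = (‖toE (A i)‖ ^ 2 / F) * ‖toE (A.mulVec r)‖ ^ 2
        - (2 / F) * (⟪toE (A i), toE r⟫ * ⟪toE (A.mulVec r), toE (A.mulVec (A i))⟫)
        + (1 / F) * (⟪toE (A i), toE r⟫ ^ 2 * ‖toE (A.mulVec (A i))‖ ^ 2 / ‖toE (A i)‖ ^ 2) := by
    intro i
    rw [toE_expand]
    have halg : ∀ s x p y z : ℝ, s ≠ 0 →
        (s / F) * (x - 2 * (p / s) * y + (p / s) ^ 2 * z)
          = (s / F) * x - (2 / F) * (p * y) + (1 / F) * (p ^ 2 * z / s) := by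
      intro s x p y z hs
      field_simp
    exact halg _ _ _ _ _ (hS i)
  simp only [hterm]
  rw [Finset.sum_add_distrib, Finset.sum_sub_distrib]
  have e1 : ∑ x, ‖toE (A x)‖ ^ 2 / F * ‖toE (A.mulVec r)‖ ^ 2 = ‖toE (A.mulVec r)‖ ^ 2 := by
    rw [← Finset.sum_mul, ← Finset.sum_div, ← hFdef, div_self hF, one_mul]
  have e2 : ∑ x, 2 / F * (⟪toE (A x), toE r⟫ * ⟪toE (A.mulVec r), toE (A.mulVec (A x))⟫)
      = 2 / F * ‖toE (Aᵀ.mulVec (A.mulVec r))‖ ^ 2 := by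
    rw [← Finset.mul_sum, kaczmarz_middle]
  have e3 : ∑ x, 1 / F * (⟪toE (A x), toE r⟫ ^ 2 * ‖toE (A.mulVec (A x))‖ ^ 2 / ‖toE (A x)‖ ^ 2)
      = 1 / F * ∑ i, ⟪toE (A i), toE r⟫ ^ 2 * ‖toE (A.mulVec (A i))‖ ^ 2 / ‖toE (A i)‖ ^ 2 :=
    (Finset.mul_sum _ _ _).symm
  rw [e1, e2, e3]
end
end

section
/- Let A ∈ ℝ^{n×n} be invertible with singular values σ_1 ≥ ... ≥ σ_n > 0, right singular vector v_ℓ associated to σ_ℓ, and x the solution of Ax = b. Under the randomized Kaczmarz update with row i chosen with probability ‖a_i‖²/‖A‖_F², the expectation satisfies E⟨x_k − x, v_ℓ⟩ = (1 − σ_ℓ²/‖A‖_F²)^k ⟨x_0 − x, v_ℓ⟩. -/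
open RealInnerProductSpace Finset Matrix
noncomputable section

/-- The Markov transition operator of randomized Kaczmarz: `(kacT A b f) y` is the
expectation of `f` at the next iterate started from `y`, the row `i` being chosen with
probability `‖a_i‖²/‖A‖_F²`. Its `k`-th iterate applied at `x₀` gives `E f(x_k)`. -/
def kacT {n : ℕ} (A : Matrix (Fin n) (Fin n) ℝ) (b : Fin n → ℝ)
    (f : (Fin n → ℝ) → ℝ) : (Fin n → ℝ) → ℝ := fun y =>
  ∑ i, (‖toE (A i)‖ ^ 2 / (∑ j, ‖toE (A j)‖ ^ 2)) *
    f (y + ((b i - ⟪toE (A i), toE y⟫) / ‖toE (A i)‖ ^ 2) • A i)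

lemma toE_inner_s8 {n : ℕ} (u w : Fin n → ℝ) : ⟪toE u, toE w⟫ = u ⬝ᵥ w := by
  simp [toE, PiLp.inner_apply, dotProduct, RCLike.inner_apply, conj_trivial, mul_comm]

lemma kacT_homog {n : ℕ} (A : Matrix (Fin n) (Fin n) ℝ) (b : Fin n → ℝ)
    (r : ℝ) (g : (Fin n → ℝ) → ℝ) :
    kacT A b (fun y => r * g y) = fun y => r * kacT A b g y := by
  funext y
  simp only [kacT, mul_sum]
  congr 1; funext i; ring

lemma kacT_key {n : ℕ} (A : Matrix (Fin n) (Fin n) ℝ) (hrows : ∀ i, A i ≠ 0)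
    (σℓ : ℝ) (v : Fin n → ℝ)
    (hsing : (Aᵀ * A).mulVec v = (σℓ ^ 2) • v)
    (b x : Fin n → ℝ) (hx : A.mulVec x = b) :
    kacT A b (fun y => ⟪toE (y - x), toE v⟫)
      = fun y => (1 - σℓ ^ 2 / (∑ j, ‖toE (A j)‖ ^ 2)) * ⟪toE (y - x), toE v⟫ := by
  funext y
  rcases Nat.eq_zero_or_pos n with h0 | hn
  · subst h0
    simp [kacT, toE_inner_s8, dotProduct]
  have hnormpos : ∀ i, (0:ℝ) < ‖toE (A i)‖ ^ 2 := by
    intro i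
    have h : toE (A i) ≠ 0 := fun h => hrows i (by simpa [toE] using h)
    exact pow_pos (norm_pos_iff.mpr h) 2
  set F := ∑ j, ‖toE (A j)‖ ^ 2 with hF
  have hFpos : 0 < F := Finset.sum_pos (fun i _ => hnormpos i) ⟨⟨0, hn⟩, mem_univ _⟩
  simp only [kacT, toE_inner_s8]
  have expand : ∀ i,
      ‖toE (A i)‖ ^ 2 / F *
        ((y + ((b i - A i ⬝ᵥ y) / ‖toE (A i)‖ ^ 2) • A i - x) ⬝ᵥ v)
      = ‖toE (A i)‖ ^ 2 / F * ((y - x) ⬝ᵥ v)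
        + (1 / F) * ((b i - A i ⬝ᵥ y) * (A i ⬝ᵥ v)) := by
    intro i
    have h1 : (y + ((b i - A i ⬝ᵥ y) / ‖toE (A i)‖ ^ 2) • A i - x) ⬝ᵥ v
        = (y - x) ⬝ᵥ v + ((b i - A i ⬝ᵥ y) / ‖toE (A i)‖ ^ 2) * (A i ⬝ᵥ v) := by
      simp [add_sub_right_comm, add_dotProduct, sub_dotProduct, smul_dotProduct,
        smul_eq_mul]
    rw [h1, mul_add]
    congr 1
    have hni : (‖toE (A i)‖ ^ 2 : ℝ) ≠ 0 := (hnormpos i).ne'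
    have hni' : ‖toE (A i)‖ ≠ 0 := fun h => hni (by rw [h]; ring)
    field_simp
  rw [Finset.sum_congr rfl (fun i _ => expand i), Finset.sum_add_distrib]
  have hsum1 : ∑ i, ‖toE (A i)‖ ^ 2 / F * ((y - x) ⬝ᵥ v) = (y - x) ⬝ᵥ v := by
    rw [← Finset.sum_mul, ← Finset.sum_div, ← hF, div_self hFpos.ne', one_mul]
  have hsum2 : ∑ i, (1 / F) * ((b i - A i ⬝ᵥ y) * (A i ⬝ᵥ v))
      = -(σℓ ^ 2 / F) * ((y - x) ⬝ᵥ v) := by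
    have hb : ∀ i, b i - A i ⬝ᵥ y = (A.mulVec (x - y)) i := by
      intro i
      simp [← hx, Matrix.mulVec_sub, Matrix.mulVec, Pi.sub_apply]
    have hkey : ∑ i, (A.mulVec (x - y)) i * (A i ⬝ᵥ v) = σℓ ^ 2 * ((x - y) ⬝ᵥ v) := by
      have : ∑ i, (A.mulVec (x - y)) i * (A i ⬝ᵥ v)
          = A.mulVec (x - y) ⬝ᵥ A.mulVec v := rfl
      rw [this, dotProduct_comm, Matrix.dotProduct_mulVec,
        ← Matrix.mulVec_transpose, Matrix.mulVec_mulVec, hsing]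
      simp [smul_dotProduct, dotProduct_comm v, smul_eq_mul,
        sub_dotProduct, dotProduct_sub, mul_sub]
    calc ∑ i, (1 / F) * ((b i - A i ⬝ᵥ y) * (A i ⬝ᵥ v))
        = (1 / F) * ∑ i, (A.mulVec (x - y)) i * (A i ⬝ᵥ v) := by
          rw [← Finset.mul_sum]
          exact congrArg _ (Finset.sum_congr rfl (fun i _ => by rw [hb i]))
      _ = (1 / F) * (σℓ ^ 2 * ((x - y) ⬝ᵥ v)) := by rw [hkey]
      _ = -(σℓ ^ 2 / F) * ((y - x) ⬝ᵥ v) := by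
          have : (x - y) ⬝ᵥ v = -((y - x) ⬝ᵥ v) := by
            simp [sub_dotProduct, neg_sub]
          rw [this]; ring
  rw [hsum1, hsum2]; ring

/-- `E ⟨x_k - x, v_ℓ⟩ = (1 - σ_ℓ²/‖A‖_F²)^k ⟨x_0 - x, v_ℓ⟩` for a right singular
vector `v_ℓ` of `A` with singular value `σ_ℓ`. -/
theorem kaczmarz_singular_vector_decay {n : ℕ} (A : Matrix (Fin n) (Fin n) ℝ)
    (hA : IsUnit A.det) (hrows : ∀ i, A i ≠ 0)
    (σℓ : ℝ) (hσ : 0 < σℓ) (v : Fin n → ℝ) (hv : v ≠ 0)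
    (hsing : (Aᵀ * A).mulVec v = (σℓ ^ 2) • v)
    (b x x0 : Fin n → ℝ) (hx : A.mulVec x = b) (k : ℕ) :
    (kacT A b)^[k] (fun y => ⟪toE (y - x), toE v⟫) x0
      = (1 - σℓ ^ 2 / (∑ j, ‖toE (A j)‖ ^ 2)) ^ k * ⟪toE (x0 - x), toE v⟫ := by
  have H : ∀ k, (kacT A b)^[k] (fun y => ⟪toE (y - x), toE v⟫)
      = fun y => (1 - σℓ ^ 2 / (∑ j, ‖toE (A j)‖ ^ 2)) ^ k * ⟪toE (y - x), toE v⟫ := by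
    intro k
    induction k with
    | zero => funext y; simp
    | succ k ih =>
      rw [Function.iterate_succ_apply', ih, kacT_homog,
        kacT_key A hrows σℓ v hsing b x hx]
      funext y; ring
  rw [H k]
end
end

section
/- For the one-step randomized Kaczmarz expectation: if r' = r − (⟨a_i, r⟩/‖a_i‖²) a_i with i chosen with probability ‖a_i‖²/‖A‖_F², then for any vector v with Aᵀ A v = σ² v, one has E⟨r', v⟩ = (1 − σ²/‖A‖_F²) ⟨r, v⟩. -/
open RealInnerProductSpace Finset Matrix
noncomputable section

/-- One-step version: `E ⟨r', v⟩ = (1 - σ²/‖A‖_F²) ⟨r, v⟩` for an eigenvector `v`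
of `Aᵀ A` with eigenvalue `σ²`. -/
theorem kaczmarz_one_step_singular_vector {n : ℕ} (A : Matrix (Fin n) (Fin n) ℝ)
    (hrows : ∀ i, A i ≠ 0) (r v : Fin n → ℝ) (σ : ℝ)
    (hv : (Aᵀ * A).mulVec v = (σ ^ 2) • v) :
    ∑ i, (‖toE (A i)‖ ^ 2 / (∑ j, ‖toE (A j)‖ ^ 2)) *
        ⟪toE (r - (⟪toE (A i), toE r⟫ / ‖toE (A i)‖ ^ 2) • A i), toE v⟫
      = (1 - σ ^ 2 / (∑ j, ‖toE (A j)‖ ^ 2)) * ⟪toE r, toE v⟫ := by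
  have hinner : ∀ (x y : Fin n → ℝ), ⟪toE x, toE y⟫ = ∑ k, x k * y k := by
    intro x y
    simp [toE, PiLp.inner_apply, RCLike.inner_apply, conj_trivial, mul_comm]
  rcases Nat.eq_zero_or_pos n with hn | hn
  · subst hn; simp [hinner]
  have hpos : ∀ i, (0:ℝ) < ‖toE (A i)‖ ^ 2 := by
    intro i
    have h0 : toE (A i) ≠ 0 := by
      intro h; exact hrows i (by simpa [toE] using h)
    exact pow_pos (norm_pos_iff.mpr h0) 2
  have hF : (0:ℝ) < ∑ j, ‖toE (A j)‖ ^ 2 :=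
    Finset.sum_pos (fun i _ => hpos i) (by simp [Finset.univ_nonempty_iff]; exact Fin.pos_iff_nonempty.mp hn)
  set F := ∑ j, ‖toE (A j)‖ ^ 2 with hFdef
  -- linearity expansion
  have hlin : ∀ i, ⟪toE (r - (⟪toE (A i), toE r⟫ / ‖toE (A i)‖ ^ 2) • A i), toE v⟫
      = ⟪toE r, toE v⟫ - (⟪toE (A i), toE r⟫ / ‖toE (A i)‖ ^ 2) * ⟪toE (A i), toE v⟫ := by
    intro i
    have : toE (r - (⟪toE (A i), toE r⟫ / ‖toE (A i)‖ ^ 2) • A i)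
        = toE r - (⟪toE (A i), toE r⟫ / ‖toE (A i)‖ ^ 2) • toE (A i) := rfl
    rw [this, inner_sub_left, real_inner_smul_left]
  -- eigen identity
  have hv' : ∀ k, ∑ j, (∑ i, A i k * A i j) * v j = σ ^ 2 * v k := by
    intro k
    have := congrFun hv k
    simpa [Matrix.mulVec, Matrix.mul_apply, Matrix.transpose_apply, dotProduct,
      Finset.sum_mul] using this
  have key : ∑ i, ⟪toE (A i), toE r⟫ * ⟪toE (A i), toE v⟫ = σ ^ 2 * ⟪toE r, toE v⟫ := by
    simp only [hinner]
    calc ∑ i, (∑ k, A i k * r k) * (∑ j, A i j * v j)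
        = ∑ i, ∑ k, ∑ j, (A i k * r k) * (A i j * v j) := by
          refine Finset.sum_congr rfl fun i _ => ?_
          rw [Finset.sum_mul]
          exact Finset.sum_congr rfl fun k _ => by rw [Finset.mul_sum]
      _ = ∑ k, ∑ i, ∑ j, (A i k * r k) * (A i j * v j) := Finset.sum_comm
      _ = ∑ k, ∑ j, ∑ i, (A i k * r k) * (A i j * v j) := by
          exact Finset.sum_congr rfl fun k _ => Finset.sum_comm
      _ = ∑ k, r k * ∑ j, (∑ i, A i k * A i j) * v j := by
          refine Finset.sum_congr rfl fun k _ => ?_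
          rw [Finset.mul_sum]
          refine Finset.sum_congr rfl fun j _ => ?_
          rw [Finset.sum_mul, Finset.mul_sum]
          exact Finset.sum_congr rfl fun i _ => by ring
      _ = ∑ k, r k * (σ ^ 2 * v k) := by
          exact Finset.sum_congr rfl fun k _ => by rw [hv' k]
      _ = σ ^ 2 * ∑ k, r k * v k := by
          rw [Finset.mul_sum]; exact Finset.sum_congr rfl fun k _ => by ring
  -- main computation
  have step : ∀ i, (‖toE (A i)‖ ^ 2 / F) *
      ⟪toE (r - (⟪toE (A i), toE r⟫ / ‖toE (A i)‖ ^ 2) • A i), toE v⟫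
      = (‖toE (A i)‖ ^ 2 / F) * ⟪toE r, toE v⟫
        - (⟪toE (A i), toE r⟫ * ⟪toE (A i), toE v⟫) / F := by
    have alg : ∀ (a Fv X Y R : ℝ), a ≠ 0 →
        (a / Fv) * (R - X / a * Y) = (a / Fv) * R - X * Y / Fv := by
      intro a Fv X Y R ha
      rcases eq_or_ne Fv 0 with h | h
      · simp [h]
      · field_simp
    intro i
    rw [hlin i]
    exact alg _ _ _ _ _ (hpos i).ne'
  rw [Finset.sum_congr rfl fun i _ => step i, Finset.sum_sub_distrib,
    ← Finset.sum_mul, ← Finset.sum_div, ← Finset.sum_div, key]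
  field_simp
  ring
end
end

section
/- Let A ∈ ℝ^{n×n} be symmetric with nonzero rows a_i, r ∈ ℝⁿ, ℓ ∈ ℕ, and let r' = r − (⟨a_i, r⟩/‖a_i‖²) a_i with i chosen with probability ‖a_i‖²/‖A‖_F². Then E‖A^ℓ r'‖² = ‖A^ℓ r‖² − (2/‖A‖_F²)‖A^{ℓ+1} r‖² + (1/‖A‖_F²) Σ_{i=1}^n ⟨a_i, r⟩² ‖A^ℓ a_i‖²/‖a_i‖². -/
open RealInnerProductSpace Finset Matrix
noncomputable section

lemma inner_toE {n : ℕ} (u v : Fin n → ℝ) : ⟪toE u, toE v⟫ = u ⬝ᵥ v := by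
  simp [toE, PiLp.inner_apply, dotProduct, RCLike.inner_apply, mul_comm]

lemma norm_sq_toE {n : ℕ} (v : Fin n → ℝ) : ‖toE v‖ ^ 2 = v ⬝ᵥ v := by
  rw [← real_inner_self_eq_norm_sq, inner_toE]

/-- Exact one-step identity for `E ‖A^ℓ r'‖²` for symmetric `A`. -/
theorem kaczmarz_one_step_identity_pow {n : ℕ} (A : Matrix (Fin n) (Fin n) ℝ)
    (hsym : Aᵀ = A) (hrows : ∀ i, A i ≠ 0) (r : Fin n → ℝ) (ℓ : ℕ) :
    ∑ i, (‖toE (A i)‖ ^ 2 / (∑ j, ‖toE (A j)‖ ^ 2)) *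
        ‖toE ((A ^ ℓ).mulVec (r - (⟪toE (A i), toE r⟫ / ‖toE (A i)‖ ^ 2) • A i))‖ ^ 2
      = ‖toE ((A ^ ℓ).mulVec r)‖ ^ 2
        - (2 / (∑ j, ‖toE (A j)‖ ^ 2)) * ‖toE ((A ^ (ℓ + 1)).mulVec r)‖ ^ 2
        + (1 / (∑ j, ‖toE (A j)‖ ^ 2)) *
            ∑ i, ⟪toE (A i), toE r⟫ ^ 2 * ‖toE ((A ^ ℓ).mulVec (A i))‖ ^ 2 / ‖toE (A i)‖ ^ 2 := by
  rcases Nat.eq_zero_or_pos n with hn | hn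
  · subst hn
    have h0 : ∀ v : Fin 0 → ℝ, ‖toE v‖ = 0 := fun v => by
      rw [Subsingleton.elim (toE v) 0, norm_zero]
    simp [h0]
  have hAA : ∀ i, A i ⬝ᵥ A i ≠ 0 := fun i => by
    simpa [dotProduct_self_eq_zero] using hrows i
  have hAApos : ∀ i, 0 < A i ⬝ᵥ A i := fun i =>
    lt_of_le_of_ne (Finset.sum_nonneg fun j _ => mul_self_nonneg _) (Ne.symm (hAA i))
  haveI : NeZero n := ⟨hn.ne'⟩
  have hS : (0:ℝ) < ∑ j, A j ⬝ᵥ A j :=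
    Finset.sum_pos (fun j _ => hAApos j) Finset.univ_nonempty
  have hSne : (∑ j, A j ⬝ᵥ A j) ≠ 0 := hS.ne'
  simp only [norm_sq_toE, inner_toE]
  have hsymp : ∀ m : ℕ, (A ^ m)ᵀ = A ^ m := fun m => by
    rw [Matrix.transpose_pow, hsym]
  have hpow : ∀ a b : ℕ, ((A ^ a).mulVec r) ⬝ᵥ ((A ^ b).mulVec r)
      = r ⬝ᵥ ((A ^ (a + b)).mulVec r) := by
    intro a b
    rw [dotProduct_mulVec, ← mulVec_transpose, hsymp, mulVec_mulVec, ← pow_add,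
      dotProduct_comm, add_comm]
  set S : ℝ := ∑ j, A j ⬝ᵥ A j with hSdef
  set x : Fin n → ℝ := (A ^ ℓ).mulVec r with hx
  have key : ∑ i, (A i ⬝ᵥ r) * (x ⬝ᵥ (A ^ ℓ).mulVec (A i))
      = ((A ^ (ℓ + 1)).mulVec r) ⬝ᵥ ((A ^ (ℓ + 1)).mulVec r) := by
    have h1 : ∀ i, x ⬝ᵥ (A ^ ℓ).mulVec (A i)
        = A.mulVec ((A ^ (2 * ℓ)).mulVec r) i := by
      intro i
      rw [dotProduct_mulVec, dotProduct_comm]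
      have : x ᵥ* (A ^ ℓ) = (A ^ (2 * ℓ)).mulVec r := by
        rw [← hsymp ℓ, vecMul_transpose, hx, mulVec_mulVec, ← pow_add, two_mul]
      rw [this]
      rfl
    have h2 : ∀ i, A i ⬝ᵥ r = A.mulVec r i := fun i => rfl
    calc ∑ i, (A i ⬝ᵥ r) * (x ⬝ᵥ (A ^ ℓ).mulVec (A i))
        = (A.mulVec r) ⬝ᵥ (A.mulVec ((A ^ (2 * ℓ)).mulVec r)) := by
          simp only [h1, h2]; rfl
      _ = ((A ^ 1).mulVec r) ⬝ᵥ ((A ^ (2 * ℓ + 1)).mulVec r) := by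
          rw [pow_one, mulVec_mulVec, ← pow_succ']
      _ = ((A ^ (ℓ + 1)).mulVec r) ⬝ᵥ ((A ^ (ℓ + 1)).mulVec r) := by
          rw [hpow, hpow]; ring_nf
  have hterm : ∀ i ∈ Finset.univ, (A i ⬝ᵥ A i / S) *
      ((A ^ ℓ).mulVec (r - ((A i ⬝ᵥ r) / (A i ⬝ᵥ A i)) • A i) ⬝ᵥ
        (A ^ ℓ).mulVec (r - ((A i ⬝ᵥ r) / (A i ⬝ᵥ A i)) • A i))
      = (A i ⬝ᵥ A i) / S * (x ⬝ᵥ x)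
        - (2 / S) * ((A i ⬝ᵥ r) * (x ⬝ᵥ (A ^ ℓ).mulVec (A i)))
        + (1 / S) * ((A i ⬝ᵥ r) ^ 2 * ((A ^ ℓ).mulVec (A i) ⬝ᵥ (A ^ ℓ).mulVec (A i))
            / (A i ⬝ᵥ A i)) := by
    intro i _
    rw [mulVec_sub, mulVec_smul]
    simp only [sub_dotProduct, dotProduct_sub, smul_dotProduct, dotProduct_smul,
      smul_eq_mul, ← hx]
    have hc := hAA i
    have := dotProduct_comm x ((A ^ ℓ).mulVec (A i))
    field_simp
    ring_nf
    rw [dotProduct_comm ((A ^ ℓ).mulVec (A i)) x]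
    ring
  rw [Finset.sum_congr rfl hterm]
  simp only [Finset.sum_add_distrib, Finset.sum_sub_distrib, ← Finset.mul_sum,
    ← Finset.sum_mul, ← Finset.sum_div]
  rw [key]
  rw [div_mul_eq_mul_div, mul_comm, mul_div_assoc, div_self hSne, mul_one]
end
end
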